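/- arXiv:1707.01297 — 2 statements merged into one kernel-verified Lean document; each statement's English description precedes it below -/
import Mathlib

section
/- Let M>1 and let φ be a twice continuously differentiable function on (0,∞) with φ'' > 0; let m = min of φ'' and M_φ = max of φ'' on [1/M, M]. Let S be a finite set; for σ∈S let a_σ≥0, u_σ∈ℝ, ρ_σ>0, and a neighbour energy e_{L,σ} ∈ [1/M, M]; let |K|>0, δt>0, ρⁿ>0, ρⁿ⁺¹>0, and eⁿ, eⁿ⁺¹ ∈ [1/M, M]. Define the upwind face energies e_σ = eⁿ if u_σ ≥ 0 and e_σ = e_{L,σ} if u_σ < 0, and the mass fluxes F_σ = a_σ·ρ_σ·u_σ. Assume the discrete mass balance (|K|/δt)(ρⁿ⁺¹−ρⁿ) + Σ_{σ∈S} F_σ = 0 and the CFL condition δt·M_φ²·Σ_{σ∈S} (F_σ)⁻ ≤ m²·|K|·ρⁿ⁺¹, where (F_σ)⁻ = max(−F_σ, 0). Then φ'(eⁿ⁺¹)·[(|K|/δt)(ρⁿ⁺¹eⁿ⁺¹ − ρⁿeⁿ) + Σ_{σ∈S} F_σ·e_σ] ≥ (|K|/δt)(ρⁿ⁺¹φ(eⁿ⁺¹)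 − ρⁿφ(eⁿ)) + Σ_{σ∈S} F_σ·φ(e_σ). -/
open Set

/-- Tangent-line lower bound with quadratic correction. -/
lemma tangent_lower_aux (φ : ℝ → ℝ) (hφ : ContDiffOn ℝ 2 φ (Set.Ioi 0))
    (lo hi c : ℝ) (hlo : 0 < lo)
    (hc : ∀ t ∈ Set.Icc lo hi, c ≤ deriv (deriv φ) t)
    {x y : ℝ} (hx : x ∈ Set.Icc lo hi) (hy : y ∈ Set.Icc lo hi) :
    φ x + deriv φ x * (y - x) + c / 2 * (y - x) ^ 2 ≤ φ y := by
  have hsub : Set.Icc lo hi ⊆ Set.Ioi 0 := fun t ht => lt_of_lt_of_le hlo ht.1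
  have hopen : IsOpen (Set.Ioi (0:ℝ)) := isOpen_Ioi
  have hφdiff : ∀ t ∈ Set.Ioi (0:ℝ), DifferentiableAt ℝ φ t := fun t ht =>
    (hφ.differentiableOn (by norm_num)).differentiableAt (hopen.mem_nhds ht)
  have hφ' : ContDiffOn ℝ 1 (deriv φ) (Set.Ioi 0) :=
    hφ.deriv_of_isOpen hopen (by norm_num)
  have hφ'diff : ∀ t ∈ Set.Ioi (0:ℝ), DifferentiableAt ℝ (deriv φ) t := fun t ht =>
    (hφ'.differentiableOn (by norm_num)).differentiableAt (hopen.mem_nhds ht)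
  set g : ℝ → ℝ := fun t => φ t - c / 2 * t ^ 2 with hgdef
  have hq : ∀ t : ℝ, HasDerivAt (fun s : ℝ => c / 2 * s ^ 2) (c * t) t := by
    intro t
    have := (hasDerivAt_pow 2 t).const_mul (c / 2)
    refine this.congr_deriv ?_
    push_cast
    ring
  have hg : ∀ t ∈ Set.Ioi (0:ℝ), HasDerivAt g (deriv φ t - c * t) t := fun t ht =>
    ((hφdiff t ht).hasDerivAt).sub (hq t)
  have hgderiv : ∀ t ∈ Set.Ioi (0:ℝ), deriv g t = deriv φ t - c * t := fun t ht =>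
    (hg t ht).deriv
  have hg2 : ∀ t ∈ Set.Ioi (0:ℝ), deriv (deriv g) t = deriv (deriv φ) t - c := by
    intro t ht
    have hEq : deriv g =ᶠ[nhds t] fun s => deriv φ s - c * s :=
      Filter.eventuallyEq_of_mem (hopen.mem_nhds ht) (fun s hs => (hg s hs).deriv)
    rw [hEq.deriv_eq]
    have : HasDerivAt (fun s => deriv φ s - c * s) (deriv (deriv φ) t - c) t := by
      have h1 := (hφ'diff t ht).hasDerivAt
      have h2 : HasDerivAt (fun s : ℝ => c * s) c t := by
        simpa using (hasDerivAt_id t).const_mul c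
      exact h1.sub h2
    exact this.deriv
  have hconv : ConvexOn ℝ (Set.Icc lo hi) g := by
    apply convexOn_of_deriv2_nonneg (convex_Icc lo hi)
    · intro t ht
      exact ((hφdiff t (hsub ht)).sub ((hq t).differentiableAt)).continuousAt.continuousWithinAt
    · intro t ht
      exact ((hφdiff t (hsub (interior_subset ht))).sub
        ((hq t).differentiableAt)).differentiableWithinAt
    · intro t ht
      have ht' := hsub (interior_subset ht)
      have hEq : deriv g =ᶠ[nhds t] fun s => deriv φ s - c * s :=
        Filter.eventuallyEq_of_mem (hopen.mem_nhds ht') (fun s hs => (hg s hs).deriv)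
      have h2 : HasDerivAt (fun s : ℝ => c * s) c t := by
        simpa using (hasDerivAt_id t).const_mul c
      have : DifferentiableAt ℝ (fun s => deriv φ s - c * s) t :=
        (hφ'diff t ht').sub h2.differentiableAt
      exact (this.congr_of_eventuallyEq hEq).differentiableWithinAt
    · intro t ht
      have ht' := hsub (interior_subset ht)
      have : deriv^[2] g t = deriv (deriv g) t := by simp [Function.iterate_succ, Function.comp]
      rw [this, hg2 t ht']
      have := hc t (interior_subset ht)
      linarith
  have hgx : DifferentiableAt ℝ g x := (hφdiff x (hsub hx)).sub ((hq x).differentiableAt)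
  have hkey : deriv g x * (y - x) ≤ g y - g x := by
    rcases lt_trichotomy x y with h | h | h
    · have h1 := hconv.deriv_le_slope hx hy h hgx
      rw [slope_def_field] at h1
      have hyx : 0 < y - x := by linarith
      have h3 := mul_le_mul_of_nonneg_right h1 hyx.le
      rw [div_mul_cancel₀ _ hyx.ne'] at h3
      exact h3
    · simp [h]
    · have := hconv.slope_le_deriv hy hx h hgx
      rw [slope_def_field] at this
      have hxy : 0 < x - y := by linarith
      have h2 : g x - g y ≤ deriv g x * (x - y) := by
        calc g x - g y = (g x - g y) / (x - y) * (x - y) := by field_simp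
          _ ≤ deriv g x * (x - y) := mul_le_mul_of_nonneg_right this hxy.le
      linarith [h2]
  rw [hgderiv x (hsub hx)] at hkey
  simp only [hgdef] at hkey
  nlinarith [hkey]

lemma tangent_upper_aux (φ : ℝ → ℝ) (hφ : ContDiffOn ℝ 2 φ (Set.Ioi 0))
    (lo hi d : ℝ) (hlo : 0 < lo)
    (hd : ∀ t ∈ Set.Icc lo hi, deriv (deriv φ) t ≤ d)
    {x y : ℝ} (hx : x ∈ Set.Icc lo hi) (hy : y ∈ Set.Icc lo hi) :
    φ y ≤ φ x + deriv φ x * (y - x) + d / 2 * (y - x) ^ 2 := by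
  have hneg : ContDiffOn ℝ 2 (fun t => -φ t) (Set.Ioi 0) := hφ.neg
  have hd1 : (fun t => deriv (fun s => -φ s) t) = fun t => -deriv φ t := by
    funext t; exact deriv.neg
  have hd2 : ∀ t, deriv (deriv (fun s => -φ s)) t = -deriv (deriv φ) t := by
    intro t
    rw [show deriv (fun s => -φ s) = fun t => -deriv φ t from hd1]
    exact deriv.neg
  have := tangent_lower_aux (fun t => -φ t) hneg lo hi (-d) hlo
    (fun t ht => by rw [hd2]; linarith [hd t ht]) hx hy
  have hdx : deriv (fun s => -φ s) x = -deriv φ x := deriv.neg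
  rw [hdx] at this
  nlinarith [this]



/-- Renormalization inequality for the explicit upwind discretization of the internal
energy convection operator under a CFL condition: multiplying the convection operator
by `φ'(eⁿ⁺¹)` dominates the renormalized (conservative) convection operator. -/
theorem explicit_upwind_energy_renormalization
    (M : ℝ) (hM : 1 < M)
    (φ : ℝ → ℝ) (hφ : ContDiffOn ℝ 2 φ (Set.Ioi 0))
    (hφ'' : ∀ x ∈ Set.Ioi (0 : ℝ), 0 < deriv (deriv φ) x)
    (m Mφ : ℝ) (hm0 : 0 < m)
    (hm : ∀ x ∈ Set.Icc (1 / M) M, m ≤ deriv (deriv φ) x)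
    (hMφ : ∀ x ∈ Set.Icc (1 / M) M, deriv (deriv φ) x ≤ Mφ)
    {ι : Type*} (S : Finset ι) (a u ρσ eL : ι → ℝ)
    (ha : ∀ σ ∈ S, 0 ≤ a σ) (hρσ : ∀ σ ∈ S, 0 < ρσ σ)
    (heL : ∀ σ ∈ S, eL σ ∈ Set.Icc (1 / M) M)
    (K δt ρn ρn1 en en1 : ℝ) (hK : 0 < K) (hδt : 0 < δt)
    (hρn : 0 < ρn) (hρn1 : 0 < ρn1)
    (hen : en ∈ Set.Icc (1 / M) M) (hen1 : en1 ∈ Set.Icc (1 / M) M)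
    (eσ F : ι → ℝ)
    (heσ : ∀ σ ∈ S, eσ σ = if 0 ≤ u σ then en else eL σ)
    (hF : ∀ σ ∈ S, F σ = a σ * ρσ σ * u σ)
    (hmass : K / δt * (ρn1 - ρn) + ∑ σ ∈ S, F σ = 0)
    (hcfl : δt * Mφ ^ 2 * ∑ σ ∈ S, max (-F σ) 0 ≤ m ^ 2 * K * ρn1) :
    K / δt * (ρn1 * φ en1 - ρn * φ en) + ∑ σ ∈ S, F σ * φ (eσ σ)
      ≤ deriv φ en1 * (K / δt * (ρn1 * en1 - ρn * en) + ∑ σ ∈ S, F σ * eσ σ) := by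
  have hIM : (0:ℝ) < 1 / M := by positivity
  have hone : (1:ℝ) ∈ Set.Icc (1 / M) M := by
    constructor
    · rw [div_le_one (by linarith)]; linarith
    · linarith
  have hmMφ : m ≤ Mφ := le_trans (hm 1 hone) (hMφ 1 hone)
  have hMφpos : 0 < Mφ := lt_of_lt_of_le hm0 hmMφ
  set A := K / δt with hAdef
  have hApos : 0 < A := div_pos hK hδt
  have hKA : K = A * δt := (div_mul_cancel₀ K hδt.ne').symm
  set d1 := deriv φ en1 with hd1def
  set E := (en - en1) ^ 2 with hEdef
  set Fm := ∑ σ ∈ S, max (-F σ) 0 with hFmdef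
  have hFm0 : 0 ≤ Fm := Finset.sum_nonneg fun σ _ => le_max_right _ _
  have hE0 : 0 ≤ E := sq_nonneg _
  -- CFL consequence: Mφ * Fm ≤ m * (A * ρn1)
  have hMφFm : Mφ * Fm ≤ m * (A * ρn1) := by
    have h3 : δt * Mφ ^ 2 * Fm ≤ m ^ 2 * (A * δt) * ρn1 := by rw [← hKA]; exact hcfl
    have h4 : m ^ 2 * (A * δt) * ρn1 ≤ m * (A * ρn1) * (δt * Mφ) := by
      nlinarith [mul_nonneg (mul_nonneg (mul_nonneg hm0.le hApos.le) hδt.le) hρn1.le]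
    have h5 : Mφ * Fm * (δt * Mφ) ≤ m * (A * ρn1) * (δt * Mφ) := by linarith [h3, h4]
    exact le_of_mul_le_mul_right h5 (mul_pos hδt hMφpos)
  -- Taylor bounds
  have t1 : φ en1 + d1 * (en - en1) + m / 2 * (en - en1) ^ 2 ≤ φ en :=
    tangent_lower_aux φ hφ (1/M) M m hIM hm hen1 hen
  -- per-face bound
  have key : ∀ σ ∈ S, F σ * (φ (eσ σ) - φ en - d1 * (eσ σ - en))
      ≤ max (-F σ) 0 * (Mφ / 2 * E) := by
    intro σ hσ
    by_cases hu : 0 ≤ u σ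
    · rw [heσ σ hσ, if_pos hu]
      have : φ en - φ en - d1 * (en - en) = 0 := by ring
      rw [this, mul_zero]
      exact mul_nonneg (le_max_right _ _) (mul_nonneg (by linarith) hE0)
    · rw [heσ σ hσ, if_neg hu]
      push_neg at hu
      have hFneg : F σ ≤ 0 := by
        rw [hF σ hσ]
        exact mul_nonpos_of_nonneg_of_nonpos (mul_nonneg (ha σ hσ) (hρσ σ hσ).le) hu.le
      have hmax : max (-F σ) 0 = -F σ := max_eq_left (by linarith)
      have tL : φ en1 + d1 * (eL σ - en1) + m / 2 * (eL σ - en1) ^ 2 ≤ φ (eL σ) :=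
        tangent_lower_aux φ hφ (1/M) M m hIM hm hen1 (heL σ hσ)
      have tU : φ en ≤ φ en1 + d1 * (en - en1) + Mφ / 2 * (en - en1) ^ 2 :=
        tangent_upper_aux φ hφ (1/M) M Mφ hIM hMφ hen1 hen
      have hB : -(Mφ / 2 * E) ≤ φ (eL σ) - φ en - d1 * (eL σ - en) := by
        nlinarith [mul_nonneg hm0.le (sq_nonneg (eL σ - en1))]
      have := mul_le_mul_of_nonpos_left hB hFneg
      rw [hmax]
      linarith [this]
  have hsum1 : ∑ σ ∈ S, F σ * (φ (eσ σ) - φ en - d1 * (eσ σ - en))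
      ≤ Fm * (Mφ / 2 * E) := by
    rw [hFmdef, Finset.sum_mul]
    exact Finset.sum_le_sum key
  -- chain with CFL
  have hstep2 : Fm * (Mφ / 2 * E) ≤ A * ρn1 * (m / 2 * E) := by
    have := mul_le_mul_of_nonneg_right hMφFm (show (0:ℝ) ≤ E / 2 by linarith)
    linarith [this]
  have hstep1 : A * ρn1 * (m / 2 * E) ≤ A * ρn1 * (φ en - φ en1 - d1 * (en - en1)) := by
    apply mul_le_mul_of_nonneg_left _ (mul_nonneg hApos.le hρn1.le)
    rw [hEdef]
    linarith [t1]
  -- expand the sum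
  have expand : ∑ σ ∈ S, F σ * (φ (eσ σ) - φ en - d1 * (eσ σ - en))
      = (∑ σ ∈ S, F σ * φ (eσ σ)) - φ en * (∑ σ ∈ S, F σ)
        - d1 * (∑ σ ∈ S, F σ * eσ σ) + d1 * en * (∑ σ ∈ S, F σ) := by
    rw [Finset.mul_sum, Finset.mul_sum, Finset.mul_sum, ← Finset.sum_sub_distrib,
      ← Finset.sum_sub_distrib, ← Finset.sum_add_distrib]
    exact Finset.sum_congr rfl fun σ _ => by ring
  have hchain : (∑ σ ∈ S, F σ * φ (eσ σ)) - φ en * (∑ σ ∈ S, F σ)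
        - d1 * (∑ σ ∈ S, F σ * eσ σ) + d1 * en * (∑ σ ∈ S, F σ)
      ≤ A * ρn1 * (φ en - φ en1 - d1 * (en - en1)) := by
    rw [← expand]; linarith [hsum1, hstep2, hstep1]
  -- mass balance
  have hρ : A * ρn = A * ρn1 + ∑ σ ∈ S, F σ := by
    have : A * (ρn1 - ρn) + ∑ σ ∈ S, F σ = 0 := hmass
    linarith [this]
  have e1 : A * ρn * φ en = (A * ρn1 + ∑ σ ∈ S, F σ) * φ en := by rw [hρ]
  have e2 : d1 * (A * ρn * en) = d1 * ((A * ρn1 + ∑ σ ∈ S, F σ) * en) := by rw [hρ]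
  show A * (ρn1 * φ en1 - ρn * φ en) + ∑ σ ∈ S, F σ * φ (eσ σ)
      ≤ d1 * (A * (ρn1 * en1 - ρn * en) + ∑ σ ∈ S, F σ * eσ σ)
  linarith [hchain, e1, e2]
end

section
/- Let M>1 and let φ be a twice continuously differentiable function on (0,∞) with φ'' > 0; let m = min of φ'' and M_φ = max of φ'' on [1/M, M]. Let S be a finite set; for σ∈S let a_σ≥0, u_σ∈ℝ, and a neighbour density ρ_{L,σ} ∈ [1/M, M]; let |K|>0, δt>0, and ρⁿ, ρⁿ⁺¹ ∈ [1/M, M]. Define the upwind face densities ρ_σ = ρⁿ if u_σ ≥ 0 and ρ_σ = ρ_{L,σ} if u_σ < 0. Assume the discrete mass balance (|K|/δt)(ρⁿ⁺¹−ρⁿ) + Σ_{σ∈S} a_σ·ρ_σ·u_σ = 0 and the CFL condition δt·M_φ²·Σ_{σ∈S} a_σ·(u_σ)⁻ ≤ m²·|K|, where (u)⁻ = max(−u,0). Then there exists a real number R with |R| ≤ M_φ·M·|ρⁿ⁺¹−ρⁿ|·|Σ_{σ∈S} a_σ·u_σ| such that (|K|/δt)(φ(ρⁿ⁺¹) − φ(ρⁿ))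 + Σ_{σ∈S} a_σ·φ(ρ_σ)·u_σ + (ρⁿ·φ'(ρⁿ) − φ(ρⁿ))·Σ_{σ∈S} a_σ·u_σ + R ≤ 0. -/
open Set

lemma tangent_le_of_convexOn {s : Set ℝ} {g : ℝ → ℝ} {g' p q : ℝ}
    (hg : ConvexOn ℝ s g) (hp : p ∈ s) (hq : q ∈ s) (hd : HasDerivAt g g' p) :
    g p + g' * (q - p) ≤ g q := by
  rcases lt_trichotomy p q with h | h | h
  · have h1 := hg.le_slope_of_hasDerivAt hp hq h hd
    rw [slope_def_field] at h1
    have h0 : 0 < q - p := by linarith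
    rw [le_div_iff₀ h0] at h1
    linarith
  · subst h; simp
  · have h1 := hg.slope_le_of_hasDerivAt hq hp h hd
    rw [slope_def_field] at h1
    have h0 : 0 < p - q := by linarith
    rw [div_le_iff₀ h0] at h1
    nlinarith

lemma taylor_upper {l r C : ℝ} {φ : ℝ → ℝ}
    (hφ : ContDiffOn ℝ 2 φ (Set.Ioi 0))
    (hsub : Set.Icc l r ⊆ Set.Ioi 0)
    (hC : ∀ x ∈ Set.Icc l r, deriv (deriv φ) x ≤ C)
    {p q : ℝ} (hp : p ∈ Set.Icc l r) (hq : q ∈ Set.Icc l r) :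
    φ q - φ p - deriv φ p * (q - p) ≤ C / 2 * (q - p) ^ 2 := by
  have hφd : ∀ y ∈ Set.Ioi (0:ℝ), DifferentiableAt ℝ φ y := fun y hy =>
    (hφ.contDiffAt (isOpen_Ioi.mem_nhds hy)).differentiableAt (by norm_num)
  have hφ' : ContDiffOn ℝ 1 (deriv φ) (Set.Ioi 0) :=
    hφ.deriv_of_isOpen isOpen_Ioi (by norm_num)
  have hφ'd : ∀ y ∈ Set.Ioi (0:ℝ), DifferentiableAt ℝ (deriv φ) y := fun y hy =>
    (hφ'.contDiffAt (isOpen_Ioi.mem_nhds hy)).differentiableAt (by norm_num)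
  set g : ℝ → ℝ := fun x => C / 2 * x ^ 2 - φ x with hgdef
  have hgd : ∀ y ∈ Set.Ioi (0:ℝ), HasDerivAt g (C * y - deriv φ y) y := by
    intro y hy
    have h1 : HasDerivAt (fun x : ℝ => C / 2 * x ^ 2) (C * y) y := by
      have := (hasDerivAt_pow 2 y).const_mul (C / 2)
      refine this.congr_deriv ?_
      push_cast; ring
    exact h1.sub (hφd y hy).hasDerivAt
  have hconv : ConvexOn ℝ (Set.Icc l r) g := by
    apply convexOn_of_deriv2_nonneg (convex_Icc l r)
    · intro y hy
      exact (hgd y (hsub hy)).differentiableAt.continuousAt.continuousWithinAt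
    · intro y hy
      exact (hgd y (hsub (interior_subset hy))).differentiableAt.differentiableWithinAt
    · intro y hy
      have hy' : y ∈ Set.Ioi (0:ℝ) := hsub (interior_subset hy)
      have heq : deriv g =ᶠ[nhds y] fun x => C * x - deriv φ x :=
        Filter.eventually_of_mem (isOpen_Ioi.mem_nhds hy') fun z hz => (hgd z hz).deriv
      have hdd : DifferentiableAt ℝ (fun x => C * x - deriv φ x) y :=
        ((differentiableAt_id.const_mul C)).sub (hφ'd y hy')
      exact (hdd.congr_of_eventuallyEq heq).differentiableWithinAt
    · intro y hy
      have hy' : y ∈ Set.Ioi (0:ℝ) := hsub (interior_subset hy)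
      have heq : deriv g =ᶠ[nhds y] fun x => C * x - deriv φ x :=
        Filter.eventually_of_mem (isOpen_Ioi.mem_nhds hy') fun z hz => (hgd z hz).deriv
      have h3 : HasDerivAt (fun x => C * x - deriv φ x) (C * 1 - deriv (deriv φ) y) y :=
        ((hasDerivAt_id y).const_mul C).sub (hφ'd y hy').hasDerivAt
      have h2 : deriv^[2] g y = C * 1 - deriv (deriv φ) y := by
        show deriv (deriv g) y = _
        rw [heq.deriv_eq]
        exact h3.deriv
      rw [h2]
      have := hC y (interior_subset hy)
      linarith
  have hpq : C / 2 * p ^ 2 - φ p + (C * p - deriv φ p) * (q - p) ≤ C / 2 * q ^ 2 - φ q :=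
    tangent_le_of_convexOn hconv hp hq (hgd p (hsub hp))
  nlinarith [hpq]

lemma taylor_lower {l r c : ℝ} {φ : ℝ → ℝ}
    (hφ : ContDiffOn ℝ 2 φ (Set.Ioi 0))
    (hsub : Set.Icc l r ⊆ Set.Ioi 0)
    (hc : ∀ x ∈ Set.Icc l r, c ≤ deriv (deriv φ) x)
    {p q : ℝ} (hp : p ∈ Set.Icc l r) (hq : q ∈ Set.Icc l r) :
    c / 2 * (q - p) ^ 2 ≤ φ q - φ p - deriv φ p * (q - p) := by
  have key := taylor_upper (φ := fun x => -φ x) hφ.neg hsub (C := -c) ?_ hp hq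
  · have h1 : deriv (fun x => -φ x) p = -deriv φ p := deriv.neg
    rw [h1] at key
    have : (-φ) q = -φ q := rfl
    nlinarith [key]
  · intro x hx
    have h1 : (deriv fun y => -φ y) = fun y => -deriv φ y := deriv.neg'
    rw [h1]
    have h2 : deriv (fun y => -deriv φ y) x = -deriv (deriv φ) x := deriv.neg
    rw [h2]
    linarith [hc x hx]

set_option maxHeartbeats 1000000 in
/-- Renormalized entropy inequality for the explicit upwind discretization of the
mass balance under a CFL condition, up to a remainder `R` controlled by the time
variation of the density and the discrete divergence of the velocity. -/
theorem explicit_upwind_mass_renormalization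
    (M : ℝ) (hM : 1 < M)
    (φ : ℝ → ℝ) (hφ : ContDiffOn ℝ 2 φ (Set.Ioi 0))
    (hφ'' : ∀ x ∈ Set.Ioi (0 : ℝ), 0 < deriv (deriv φ) x)
    (m Mφ : ℝ) (hm0 : 0 < m)
    (hm : ∀ x ∈ Set.Icc (1 / M) M, m ≤ deriv (deriv φ) x)
    (hMφ : ∀ x ∈ Set.Icc (1 / M) M, deriv (deriv φ) x ≤ Mφ)
    {ι : Type*} (S : Finset ι) (a u ρL : ι → ℝ)
    (ha : ∀ σ ∈ S, 0 ≤ a σ) (hρL : ∀ σ ∈ S, ρL σ ∈ Set.Icc (1 / M) M)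
    (K δt ρn ρn1 : ℝ) (hK : 0 < K) (hδt : 0 < δt)
    (hρn : ρn ∈ Set.Icc (1 / M) M) (hρn1 : ρn1 ∈ Set.Icc (1 / M) M)
    (ρσ : ι → ℝ) (hρσ : ∀ σ ∈ S, ρσ σ = if 0 ≤ u σ then ρn else ρL σ)
    (hmass : K / δt * (ρn1 - ρn) + ∑ σ ∈ S, a σ * ρσ σ * u σ = 0)
    (hcfl : δt * Mφ ^ 2 * ∑ σ ∈ S, a σ * max (-u σ) 0 ≤ m ^ 2 * K) :
    ∃ R : ℝ, |R| ≤ Mφ * M * |ρn1 - ρn| * |∑ σ ∈ S, a σ * u σ| ∧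
      K / δt * (φ ρn1 - φ ρn) + ∑ σ ∈ S, a σ * φ (ρσ σ) * u σ
        + (ρn * deriv φ ρn - φ ρn) * ∑ σ ∈ S, a σ * u σ + R ≤ 0 := by
  have hM0 : (0:ℝ) < M := by linarith
  have h1M : (0:ℝ) < 1 / M := by positivity
  have hsub : Set.Icc (1/M) M ⊆ Set.Ioi 0 := fun x hx => lt_of_lt_of_le h1M hx.1
  have h1mem : (1:ℝ) ∈ Set.Icc (1/M) M := by
    constructor
    · rw [div_le_one hM0]; linarith
    · linarith
  have hmMφ : m ≤ Mφ := le_trans (hm 1 h1mem) (hMφ 1 h1mem)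
  have hMφ0 : (0:ℝ) < Mφ := lt_of_lt_of_le hm0 hmMφ
  have hρσmem : ∀ σ ∈ S, ρσ σ ∈ Set.Icc (1/M) M := by
    intro σ hσ
    rw [hρσ σ hσ]
    split
    · exact hρn
    · exact hρL σ hσ
  -- Taylor bounds
  have hP : φ ρn1 - φ ρn - deriv φ ρn * (ρn1 - ρn) ≤ Mφ / 2 * (ρn1 - ρn) ^ 2 :=
    taylor_upper hφ hsub hMφ hρn hρn1
  have hQ : ∀ σ ∈ S, m / 2 * (ρσ σ - ρn) ^ 2 ≤
      φ (ρσ σ) - φ ρn - deriv φ ρn * (ρσ σ - ρn) :=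
    fun σ hσ => taylor_lower hφ hsub hm hρn (hρσmem σ hσ)
  -- abbreviations
  set d := ∑ σ ∈ S, a σ * u σ with hd_def
  set A := ∑ σ ∈ S, a σ * max (-u σ) 0 with hA_def
  set Sg := ∑ σ ∈ S, a σ * max (-u σ) 0 * (ρσ σ - ρn) with hSg_def
  set B2 := ∑ σ ∈ S, a σ * max (-u σ) 0 * (ρσ σ - ρn) ^ 2 with hB2_def
  set Ph := ∑ σ ∈ S, a σ * max (-u σ) 0 * (φ (ρσ σ) - φ ρn) with hPh_def
  clear_value d A Sg B2 Ph
  have he : ∀ σ ∈ S, 0 ≤ a σ * max (-u σ) 0 :=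
    fun σ hσ => mul_nonneg (ha σ hσ) (le_max_right _ _)
  have hB2nn : 0 ≤ B2 := by
    rw [hB2_def]
    exact Finset.sum_nonneg fun σ hσ => mul_nonneg (he σ hσ) (sq_nonneg _)
  have hAnn : 0 ≤ A := by
    rw [hA_def]
    exact Finset.sum_nonneg he
  -- sum identities
  have hS1 : ∑ σ ∈ S, a σ * ρσ σ * u σ = ρn * d - Sg := by
    rw [hd_def, hSg_def, Finset.mul_sum, ← Finset.sum_sub_distrib]
    refine Finset.sum_congr rfl fun σ hσ => ?_
    rcases le_or_gt 0 (u σ) with h | h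
    · rw [hρσ σ hσ, if_pos h, max_eq_right (by linarith)]
      ring
    · rw [hρσ σ hσ, if_neg (not_le.mpr h), max_eq_left (by linarith)]
      ring
  have hS2 : ∑ σ ∈ S, a σ * φ (ρσ σ) * u σ = φ ρn * d - Ph := by
    rw [hd_def, hPh_def, Finset.mul_sum, ← Finset.sum_sub_distrib]
    refine Finset.sum_congr rfl fun σ hσ => ?_
    rcases le_or_gt 0 (u σ) with h | h
    · rw [hρσ σ hσ, if_pos h, max_eq_right (by linarith)]
      ring
    · rw [hρσ σ hσ, if_neg (not_le.mpr h), max_eq_left (by linarith)]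
      ring
  have hmass' : K / δt * (ρn1 - ρn) = Sg - ρn * d := by
    rw [hS1] at hmass; linarith
  -- lower bound on Ph
  have hQsum : deriv φ ρn * Sg + m / 2 * B2 ≤ Ph := by
    rw [hSg_def, hB2_def, hPh_def, Finset.mul_sum, Finset.mul_sum, ← Finset.sum_add_distrib]
    refine Finset.sum_le_sum fun σ hσ => ?_
    nlinarith [mul_le_mul_of_nonneg_left (hQ σ hσ) (he σ hσ)]
  -- x facts
  have hx0 : 0 ≤ K / δt * (ρn1 - ρn) ^ 2 := by positivity
  have hxSg : K / δt * (ρn1 - ρn) ^ 2 = (ρn1 - ρn) * Sg - (ρn1 - ρn) * ρn * d := by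
    have h1 : K / δt * (ρn1 - ρn) ^ 2 = (ρn1 - ρn) * (K / δt * (ρn1 - ρn)) := by ring
    rw [h1, hmass']; ring
  -- Young
  have hyoung : 2 * m * Mφ * ((ρn1 - ρn) * Sg) ≤
      Mφ ^ 2 * (ρn1 - ρn) ^ 2 * A + m ^ 2 * B2 := by
    rw [hSg_def, hA_def, hB2_def]
    have hle : ∑ σ ∈ S, a σ * max (-u σ) 0 * (2 * m * Mφ * (ρn1 - ρn) * (ρσ σ - ρn)) ≤
        ∑ σ ∈ S, a σ * max (-u σ) 0 *
          (Mφ ^ 2 * (ρn1 - ρn) ^ 2 + m ^ 2 * (ρσ σ - ρn) ^ 2) := by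
      refine Finset.sum_le_sum fun σ hσ => ?_
      have h1 := he σ hσ
      nlinarith [sq_nonneg (Mφ * (ρn1 - ρn) - m * (ρσ σ - ρn)),
        mul_nonneg h1 (sq_nonneg (Mφ * (ρn1 - ρn) - m * (ρσ σ - ρn)))]
    calc 2 * m * Mφ * ((ρn1 - ρn) * ∑ σ ∈ S, a σ * max (-u σ) 0 * (ρσ σ - ρn))
        = ∑ σ ∈ S, a σ * max (-u σ) 0 * (2 * m * Mφ * (ρn1 - ρn) * (ρσ σ - ρn)) := by
          rw [Finset.mul_sum, Finset.mul_sum]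
          exact Finset.sum_congr rfl fun σ _ => by ring
      _ ≤ ∑ σ ∈ S, a σ * max (-u σ) 0 *
            (Mφ ^ 2 * (ρn1 - ρn) ^ 2 + m ^ 2 * (ρσ σ - ρn) ^ 2) := hle
      _ = Mφ ^ 2 * (ρn1 - ρn) ^ 2 * (∑ σ ∈ S, a σ * max (-u σ) 0)
            + m ^ 2 * ∑ σ ∈ S, a σ * max (-u σ) 0 * (ρσ σ - ρn) ^ 2 := by
          rw [Finset.mul_sum, Finset.mul_sum, ← Finset.sum_add_distrib]
          exact Finset.sum_congr rfl fun σ _ => by ring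
  -- CFL consequence
  have hcfl2 : Mφ ^ 2 * (ρn1 - ρn) ^ 2 * A ≤ m ^ 2 * (K / δt * (ρn1 - ρn) ^ 2) := by
    have h1 := mul_le_mul_of_nonneg_right hcfl (sq_nonneg (ρn1 - ρn))
    have h4 : m ^ 2 * (K / δt * (ρn1 - ρn) ^ 2) = m ^ 2 * K * (ρn1 - ρn) ^ 2 / δt := by
      field_simp
    rw [h4, le_div_iff₀ hδt]
    nlinarith [h1]
  -- bound on the divergence term
  have habs : -((ρn1 - ρn) * ρn * d) ≤ M * |ρn1 - ρn| * |d| := by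
    have h1 : -((ρn1 - ρn) * ρn * d) ≤ |(ρn1 - ρn) * ρn * d| := neg_le_abs _
    have h2 : |(ρn1 - ρn) * ρn * d| = |ρn1 - ρn| * |ρn| * |d| := by
      rw [abs_mul, abs_mul]
    have h3 : |ρn| ≤ M := by
      rw [abs_le]
      exact ⟨by linarith [hρn.1], hρn.2⟩
    have h4 : |ρn1 - ρn| * |ρn| * |d| ≤ |ρn1 - ρn| * M * |d| :=
      mul_le_mul_of_nonneg_right (mul_le_mul_of_nonneg_left h3 (abs_nonneg _)) (abs_nonneg _)
    nlinarith [h1, h2, h4]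
  -- step 1
  have step1 : K / δt * (φ ρn1 - φ ρn) + ∑ σ ∈ S, a σ * φ (ρσ σ) * u σ
      + (ρn * deriv φ ρn - φ ρn) * d ≤
      Mφ / 2 * (K / δt * (ρn1 - ρn) ^ 2) - m / 2 * B2 := by
    have hF2 : K / δt * (φ ρn1 - φ ρn) + ∑ σ ∈ S, a σ * φ (ρσ σ) * u σ
        + (ρn * deriv φ ρn - φ ρn) * d
        = K / δt * (φ ρn1 - φ ρn - deriv φ ρn * (ρn1 - ρn)) + deriv φ ρn * Sg - Ph := by
      rw [hS2]
      linear_combination (deriv φ ρn) * hmass'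
    rw [hF2]
    have h1 : K / δt * (φ ρn1 - φ ρn - deriv φ ρn * (ρn1 - ρn)) ≤
        Mφ / 2 * (K / δt * (ρn1 - ρn) ^ 2) :=
      (mul_le_mul_of_nonneg_left hP (by positivity : (0:ℝ) ≤ K / δt)).trans_eq (by ring)
    linarith [hQsum, h1]
  -- step 2
  have hscaled : 2 * m * Mφ * (-((ρn1 - ρn) * ρn * d)) ≤
      2 * m * Mφ * (M * |ρn1 - ρn| * |d|) :=
    mul_le_mul_of_nonneg_left habs (by positivity)
  have hx2 : 2 * m * Mφ * (K / δt * (ρn1 - ρn) ^ 2) =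
      2 * m * Mφ * ((ρn1 - ρn) * Sg) + 2 * m * Mφ * (-((ρn1 - ρn) * ρn * d)) := by
    linear_combination (2 * m * Mφ) * hxSg
  have hcomb : 2 * m * Mφ * (K / δt * (ρn1 - ρn) ^ 2) ≤
      m ^ 2 * (K / δt * (ρn1 - ρn) ^ 2) + m ^ 2 * B2
        + 2 * m * Mφ * (M * |ρn1 - ρn| * |d|) := by
    linarith [hx2, hyoung, hcfl2, hscaled]
  have h5 : (2 * Mφ - m) * (K / δt * (ρn1 - ρn) ^ 2) ≤ m * B2 + 2 * Mφ * (M * |ρn1 - ρn| * |d|) := by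
    have h6 : m * ((2 * Mφ - m) * (K / δt * (ρn1 - ρn) ^ 2)) ≤
        m * (m * B2 + 2 * Mφ * (M * |ρn1 - ρn| * |d|)) := by
      have hring : m * ((2 * Mφ - m) * (K / δt * (ρn1 - ρn) ^ 2)) =
          2 * m * Mφ * (K / δt * (ρn1 - ρn) ^ 2) - m ^ 2 * (K / δt * (ρn1 - ρn) ^ 2) := by ring
      have hring2 : m * (m * B2 + 2 * Mφ * (M * |ρn1 - ρn| * |d|)) =
          m ^ 2 * B2 + 2 * m * Mφ * (M * |ρn1 - ρn| * |d|) := by ring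
      rw [hring, hring2]
      linarith [hcomb]
    exact le_of_mul_le_mul_left h6 hm0
  have step2 : Mφ * (K / δt * (ρn1 - ρn) ^ 2) ≤ m * B2 + 2 * Mφ * (M * |ρn1 - ρn| * |d|) := by
    have hpos : 0 ≤ (Mφ - m) * (K / δt * (ρn1 - ρn) ^ 2) :=
      mul_nonneg (by linarith) hx0
    have hring : Mφ * (K / δt * (ρn1 - ρn) ^ 2) =
        (2 * Mφ - m) * (K / δt * (ρn1 - ρn) ^ 2) - (Mφ - m) * (K / δt * (ρn1 - ρn) ^ 2) := by ring
    rw [hring]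
    linarith [h5, hpos]
  have hfinal : K / δt * (φ ρn1 - φ ρn) + ∑ σ ∈ S, a σ * φ (ρσ σ) * u σ
      + (ρn * deriv φ ρn - φ ρn) * d ≤ Mφ * M * |ρn1 - ρn| * |d| := by
    have hring : Mφ * M * |ρn1 - ρn| * |d| = Mφ * (M * |ρn1 - ρn| * |d|) := by ring
    rw [hring]
    linarith [step1, step2]
  have hbnd0 : (0:ℝ) ≤ Mφ * M * |ρn1 - ρn| * |d| := by positivity
  refine ⟨-(max (K / δt * (φ ρn1 - φ ρn) + ∑ σ ∈ S, a σ * φ (ρσ σ) * u σ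
      + (ρn * deriv φ ρn - φ ρn) * d) 0), ?_, ?_⟩
  · rw [abs_neg, abs_of_nonneg (le_max_right _ _)]
    exact max_le hfinal hbnd0
  · linarith [le_max_left (K / δt * (φ ρn1 - φ ρn) + ∑ σ ∈ S, a σ * φ (ρσ σ) * u σ
      + (ρn * deriv φ ρn - φ ρn) * d) (0:ℝ)]
end
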